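/- Let A be a right coherent ring and X a contravariantly finite subcategory of mod-A containing all finitely generated projective A-modules. Then for every M in mod-A there exists an exact sequence 0 → K_M → θ_λ(M) →(γ_M) θ_ρ(M) → L_M → 0 in mod-X in which both K_M and L_M belong to mod_0-X. -/

import Mathlib

/- Common setup: right modules over a ring are realized as left modules over the opposite
ring; `mod-X` (finitely presented additive functors on a subcategory `X` of `mod-Λ`) is
realized inside the abelian category of contravariant `AddCommGrp`-valued functors on `X`. -/

open CategoryTheory CategoryTheory.Limits Opposite

universe u

noncomputable section

namespace RelAus

attribute [local instance] CategoryTheory.Abelian.hasFiniteBiproducts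

/-- `N` is a direct summand of `M`. -/
def IsDirectSummand {C : Type*} [Category C] (N M : C) : Prop :=
  ∃ (i : N ⟶ M) (r : M ⟶ N), i ≫ r = 𝟙 N

/-- `M ∈ add Xbar`: `M` is a direct summand of a finite direct sum of copies of `Xbar`. -/
def InAdd {R : Type u} [Ring R] (Xbar M : ModuleCat.{u} R) : Prop :=
  ∃ n : ℕ, IsDirectSummand M (ModuleCat.of R (Fin n → Xbar))

/-- `Xbar` is an additive generator of the class `𝒮` of modules: `𝒮 = add Xbar`. -/
def IsAddGen {R : Type u} [Ring R] (𝒮 : Set (ModuleCat.{u} R)) (Xbar : ModuleCat.{u} R) : Prop :=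
  Xbar ∈ 𝒮 ∧ ∀ M : ModuleCat.{u} R, M ∈ 𝒮 ↔ InAdd Xbar M

/-- An object of an additive category is indecomposable if it is nonzero and in any biproduct
decomposition one of the two factors is zero. -/
def IsIndecObj {C : Type*} [Category C] [Preadditive C] [HasBinaryBiproducts C] (N : C) : Prop :=
  ¬ IsZero N ∧ ∀ A B : C, Nonempty (N ≅ A ⊞ B) → IsZero A ∨ IsZero B

/-- The cardinality of the set of isomorphism classes of indecomposable direct summands
of the module `T`. -/
def numIndecSummands {R : Type u} [Ring R] (T : ModuleCat.{u} R) : Cardinal :=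
  Cardinal.mk {q : _root_.Quotient (isIsomorphicSetoid (ModuleCat.{u} R)) //
    ∃ N : ModuleCat.{u} R, Quotient.mk (isIsomorphicSetoid _) N = q ∧
      IsIndecObj N ∧ IsDirectSummand N T}

/-- The cardinality of the set of isomorphism classes of indecomposable (finitely generated)
projective `R`-modules. -/
def numIndecProj (R : Type u) [Ring R] : Cardinal :=
  Cardinal.mk {q : _root_.Quotient (isIsomorphicSetoid (ModuleCat.{u} R)) //
    ∃ N : ModuleCat.{u} R, Quotient.mk (isIsomorphicSetoid _) N = q ∧
      IsIndecObj N ∧ Projective N ∧ Module.Finite R N}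

/-- `T` has projective dimension at most one: there is a short exact sequence
`0 → P₁ → P₀ → T → 0` with `P₁`, `P₀` projective. -/
def ModPdLeOne {R : Type u} [Ring R] (T : ModuleCat.{u} R) : Prop :=
  ∃ (P₁ P₀ : ModuleCat.{u} R) (i : P₁ ⟶ P₀) (p : P₀ ⟶ T) (w : i ≫ p = 0),
    Projective P₁ ∧ Projective P₀ ∧ (ShortComplex.mk i p w).ShortExact

/-- `T` has injective dimension at most one: there is a short exact sequence
`0 → T → I₀ → I₁ → 0` with `I₀`, `I₁` injective. -/
def ModIdLeOne {R : Type u} [Ring R] (T : ModuleCat.{u} R) : Prop :=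
  ∃ (I₀ I₁ : ModuleCat.{u} R) (i : T ⟶ I₀) (p : I₀ ⟶ I₁) (w : i ≫ p = 0),
    Injective I₀ ∧ Injective I₁ ∧ (ShortComplex.mk i p w).ShortExact

/-- `T` is rigid, i.e. `Ext¹_R(T,T) = 0`: every self-extension of `T` splits. -/
def ModRigid {R : Type u} [Ring R] (T : ModuleCat.{u} R) : Prop :=
  ∀ (E : ModuleCat.{u} R) (i : T ⟶ E) (p : E ⟶ T) (w : i ≫ p = 0),
    (ShortComplex.mk i p w).ShortExact → Nonempty (ShortComplex.mk i p w).Splitting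

/-- `T` is a tilting `R`-module: `pd T ≤ 1`, `Ext¹_R(T,T) = 0`, and the number of isomorphism
classes of indecomposable direct summands of `T` equals the number of isomorphism classes of
indecomposable projective `R`-modules. -/
structure IsTiltingModule {R : Type u} [Ring R] (T : ModuleCat.{u} R) : Prop where
  pd_le_one : ModPdLeOne T
  rigid : ModRigid T
  summands : numIndecSummands T = numIndecProj R

/-- `T` is a cotilting `R`-module: `id T ≤ 1`, `Ext¹_R(T,T) = 0`, and the same counting
condition as for tilting modules. -/
structure IsCotiltingModule {R : Type u} [Ring R] (T : ModuleCat.{u} R) : Prop where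
  id_le_one : ModIdLeOne T
  rigid : ModRigid T
  summands : numIndecSummands T = numIndecProj R

/-- `M` is a (finitely generated) Gorenstein projective `R`-module: `M` is a syzygy of a
totally acyclic complex of finitely generated projective modules, i.e. of an acyclic complex
`P` of projectives such that `Hom_R(P, Q)` is acyclic for every projective `Q`. -/
def IsGProj {R : Type u} [Ring R] (M : ModuleCat.{u} R) : Prop :=
  ∃ P : CochainComplex (ModuleCat.{u} R) ℤ,
    (∀ n, Projective (P.X n)) ∧ (∀ n, Module.Finite R (P.X n)) ∧
    (∀ n, P.ExactAt n) ∧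
    (∀ Q : ModuleCat.{u} R, Projective Q →
      ∀ n, (((preadditiveYoneda.obj Q).mapHomologicalComplex _).obj P.op).ExactAt n) ∧
    ∃ n : ℤ, Nonempty (M ≅ kernel (P.d n (n + 1)))

/-- The class of finitely generated Gorenstein projective `R`-modules.  Applied to `R = Λᵐᵒᵖ`
this is `Gprj-Λ`, the Gorenstein projective right `Λ`-modules. -/
def GprjSet (R : Type u) [Ring R] : Set (ModuleCat.{u} R) :=
  {M | Module.Finite R M ∧ IsGProj M}

/-- The category of finitely generated `R`-modules. -/
abbrev fgMod (R : Type u) [Ring R] := ObjectProperty.FullSubcategory (fun M : ModuleCat.{u} R => Module.Finite R M)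

/-- `M` is basic: no indecomposable module occurs twice in a direct sum decomposition. -/
def IsBasic {R : Type u} [Ring R] (M : ModuleCat.{u} R) : Prop :=
  ∀ (N A : ModuleCat.{u} R), IsIndecObj N → ¬ Nonempty (M ≅ (N ⊞ N) ⊞ A)

/-- Two rings are Morita equivalent if their categories of finitely generated modules are
equivalent.  Applied to the opposite rings, this says that the categories of finitely
generated right modules are equivalent. -/
def MoritaEq (R S : Type u) [Ring R] [Ring S] : Prop :=
  Nonempty (fgMod R ≌ fgMod S)

/-- A ring `A` is right coherent: every finitely generated right ideal of `A` (i.e. left ideal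
of `Aᵐᵒᵖ`) is finitely presented as a right `A`-module. -/
def RightCoherent (A : Type u) [Ring A] : Prop :=
  ∀ I : Ideal Aᵐᵒᵖ, I.FG → Module.FinitePresentation Aᵐᵒᵖ I

/-- `Λ` is an (Iwanaga-)Gorenstein ring of G-dimension one: the injective dimension of `Λ`
as a right module over itself and as a left module over itself are both equal to `1`. -/
def GorensteinDimOne (Λ : Type u) [Ring Λ] : Prop :=
  (ModIdLeOne (ModuleCat.of Λᵐᵒᵖ Λ) ∧ ¬ Injective (ModuleCat.of Λᵐᵒᵖ Λ)) ∧
  (ModIdLeOne (ModuleCat.of Λ Λ) ∧ ¬ Injective (ModuleCat.of Λ Λ))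

variable {Λ : Type u} [Ring Λ]

/-- The category of right `Λ`-modules, realized as left modules over `Λᵐᵒᵖ`. -/
abbrev RMod (Λ : Type u) [Ring Λ] := ModuleCat.{u} Λᵐᵒᵖ

/-- Given the end `ε : Q ⟶ Xbar` of a projective presentation of `Xbar`, the evaluation
`T = ζ^X_{Xbar}(Xbar)` of the intermediate extension at `Xbar`: concretely, it is the set of
endomorphisms of `Xbar` that factor through `ε`, which is a right ideal of
`Γ = End_Λ(Xbar)`, i.e. a `Γᵐᵒᵖ`-submodule of `Γ` (right `Γ`-modules being realized as
`Γᵐᵒᵖ`-modules). -/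
def zetaEvalSub {Q Xbar : RMod Λ} (ε : Q ⟶ Xbar) :
    Submodule (End Xbar)ᵐᵒᵖ (End Xbar) where
  carrier := {g : End Xbar | ∃ h : Xbar ⟶ Q, h ≫ ε = g}
  add_mem' := by
    rintro a b ⟨h₁, rfl⟩ ⟨h₂, rfl⟩
    exact ⟨h₁ + h₂, by simp [Preadditive.add_comp]⟩
  zero_mem' := ⟨0, by simp⟩
  smul_mem' := by
    rintro e g ⟨h, rfl⟩
    exact ⟨e.unop ≫ h, by simp [Category.assoc]⟩

/-- `Xm` lies in `⊥Λ`, i.e. `Ext^i_Λ(Xm, Λ) = 0` for all `i ≥ 1`, where `Λ` is regarded as a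
right module over itself. -/
def MemPerp [HasExt.{u+1} (RMod Λ)] (Xm : RMod Λ) : Prop :=
  ∀ i : ℕ, 1 ≤ i → ∀ x : Abelian.Ext Xm (ModuleCat.of Λᵐᵒᵖ Λ) i, x = 0

/-- The standing hypotheses on a class `𝒳` of right `Λ`-modules: it consists of modules
belonging to `mod-Λ` (described by the predicate `memP`), it is additively closed and closed
under direct summands (hence a full additive subcategory of `mod-Λ` closed under summands),
it contains all the projective modules of `mod-Λ`, and it is contravariantly finite in
`mod-Λ`, i.e. every module in `mod-Λ` has a right `𝒳`-approximation. -/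
structure GoodSub (memP : RMod Λ → Prop) (𝒳 : Set (RMod Λ)) : Prop where
  mem_mod : ∀ M ∈ 𝒳, memP M
  sum_mem : ∀ M N : RMod Λ, M ∈ 𝒳 → N ∈ 𝒳 → ModuleCat.of Λᵐᵒᵖ (M × N) ∈ 𝒳
  summand_mem : ∀ M N : RMod Λ, M ∈ 𝒳 → IsDirectSummand N M → N ∈ 𝒳
  proj_mem : ∀ P : RMod Λ, memP P → Projective P → P ∈ 𝒳
  approx : ∀ M : RMod Λ, memP M → ∃ X₀ ∈ 𝒳, ∃ f : X₀ ⟶ M,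
    ∀ X' ∈ 𝒳, ∀ g : X' ⟶ M, ∃ h : X' ⟶ X₀, h ≫ f = g

/-- `𝒳` is closed under syzygies: for every short exact sequence `0 → Ω → P → X' → 0` with
`X' ∈ 𝒳` and `P` a finitely generated projective module, `Ω ∈ 𝒳`. -/
def ClosedUnderSyzygies (𝒳 : Set (RMod Λ)) : Prop :=
  ∀ (Ω P X' : RMod Λ), X' ∈ 𝒳 → Projective P → Module.Finite Λᵐᵒᵖ P →
    ∀ (i : Ω ⟶ P) (p : P ⟶ X') (w : i ≫ p = 0),
      (ShortComplex.mk i p w).ShortExact → Ω ∈ 𝒳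

/-- `𝒳` is closed under submodules. -/
def ClosedUnderSubmodules (𝒳 : Set (RMod Λ)) : Prop :=
  ∀ (N X' : RMod Λ), X' ∈ 𝒳 → ∀ i : N ⟶ X', Mono i → N ∈ 𝒳

section FunctorCategory

variable (𝒳 : Set (RMod Λ))

/-- The subcategory `X`, as a full subcategory of the category of right `Λ`-modules. -/
abbrev XCat := ObjectProperty.FullSubcategory (fun M : RMod Λ => M ∈ 𝒳)

/-- The ambient abelian category of contravariant `AddCommGrp`-valued functors on `X`;
`mod-X` is its full subcategory of finitely presented functors (see `FinPres`). -/
abbrev FunCat := (XCat 𝒳)ᵒᵖ ⥤ AddCommGrpCat.{u}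

/-- The restricted Yoneda functor `M ↦ Hom_Λ(-, M)|_X`.  On an arbitrary module `M` it
gives `θ_ρ(M)`; on objects of `X` it gives the representable functors, which are exactly the
projective objects of `mod-X`. -/
def resY : RMod Λ ⥤ FunCat 𝒳 :=
  preadditiveYoneda ⋙
    (Functor.whiskeringLeft (XCat 𝒳)ᵒᵖ (RMod Λ)ᵒᵖ AddCommGrpCat.{u}).obj (ObjectProperty.ι _).op

/-- `F` is a finitely presented functor on `X`, i.e. an object of `mod-X`: there is an exact
sequence `Hom(-,X₁)|_X ⟶ Hom(-,X₀)|_X ⟶ F ⟶ 0` with `X₁, X₀ ∈ 𝒳`. -/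
def FinPres (F : FunCat 𝒳) : Prop :=
  ∃ (X₁ X₀ : RMod Λ) (_ : X₁ ∈ 𝒳) (_ : X₀ ∈ 𝒳) (d : X₁ ⟶ X₀),
    Nonempty (F ≅ cokernel ((resY 𝒳).map d))

/-- `F` vanishes on all projective `Λ`-modules, i.e. `F` lies in `mod₀-X`. -/
def Vanish0 (F : FunCat 𝒳) : Prop :=
  ∀ P : XCat 𝒳, Projective P.obj → IsZero (F.obj (op P))

lemma resY_comp_zero {P Q M : RMod Λ} (d : P ⟶ Q) (ε : Q ⟶ M) (w : d ≫ ε = 0) :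
    (resY 𝒳).map d ≫ (resY 𝒳).map ε = 0 := by
  ext Z g
  erw [comp_apply]
  show (_ ≫ d) ≫ ε = (0 : ((resY 𝒳).obj M).obj Z)
  first
    | exact (Category.assoc _ _ _).trans (by rw [w, comp_zero])
    | (erw [Category.assoc, w, comp_zero]; rfl)
    | simp [w]

/-- Given a projective presentation `P ⟶ Q ⟶ M ⟶ 0` of `M`, the canonical natural map
`γ_M : θ_λ(M) ⟶ θ_ρ(M)` induced by the identity of `M`, where
`θ_λ(M) = coker(Hom(-,P)|_X → Hom(-,Q)|_X)` and `θ_ρ(M) = Hom(-,M)|_X`. -/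
def gammaMap {P Q M : RMod Λ} (d : P ⟶ Q) (ε : Q ⟶ M) (w : d ≫ ε = 0) :
    cokernel ((resY 𝒳).map d) ⟶ (resY 𝒳).obj M :=
  cokernel.desc _ ((resY 𝒳).map ε) (resY_comp_zero 𝒳 d ε w)

/-- The intermediate extension `ζ^X_M := Im (γ_M)`. -/
def zetaObj {P Q M : RMod Λ} (d : P ⟶ Q) (ε : Q ⟶ M) (w : d ≫ ε = 0) : FunCat 𝒳 :=
  image (gammaMap 𝒳 d ε w)

/-- The unit map `coker(Hom(-,X₁)|_X → Hom(-,X₀)|_X) ⟶ Hom(-, coker(X₁ → X₀))|_X`, i.e.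
the unit `F ⟶ θ_ρ θ (F)` of the adjunction `(θ, θ_ρ)` evaluated on a functor presented by
`d' : X₁ ⟶ X₀`. -/
def unitMap {X₁ X₀ : RMod Λ} (d' : X₁ ⟶ X₀) :
    cokernel ((resY 𝒳).map d') ⟶ (resY 𝒳).obj (cokernel d') :=
  cokernel.desc _ ((resY 𝒳).map (cokernel.π d'))
    (resY_comp_zero 𝒳 d' (cokernel.π d') (cokernel.condition d'))

/-- In `mod-X`, `F` has projective dimension at most one: there is a short exact sequence
`0 → Hom(-,X₁)|_X → Hom(-,X₀)|_X → F → 0` by representable functors (the projective objects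
of `mod-X`). -/
def PdLeOne (F : FunCat 𝒳) : Prop :=
  ∃ (X₁ X₀ : RMod Λ) (_ : X₁ ∈ 𝒳) (_ : X₀ ∈ 𝒳) (a : (resY 𝒳).obj X₁ ⟶ (resY 𝒳).obj X₀)
    (b : (resY 𝒳).obj X₀ ⟶ F) (w : a ≫ b = 0), (ShortComplex.mk a b w).ShortExact

/-- `F` lies in `Ker ℓ_λ`, where `ℓ_λ` is the left adjoint of the inclusion
`ℓ : mod₀-X → mod-X`; equivalently (by adjunction), `F` admits no nonzero morphism to any
object of `mod₀-X`. -/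
def MemKerEllLambda (F : FunCat 𝒳) : Prop :=
  ∀ G : FunCat 𝒳, FinPres 𝒳 G → Vanish0 𝒳 G → ∀ η : F ⟶ G, η = 0

/-- `F` lies in `Ker ℓ_ρ`, where `ℓ_ρ` is the right adjoint of the inclusion
`ℓ : mod₀-X → mod-X`; equivalently (by adjunction), `F` receives no nonzero morphism from
any object of `mod₀-X`. -/
def MemKerEllRho (F : FunCat 𝒳) : Prop :=
  ∀ G : FunCat 𝒳, FinPres 𝒳 G → Vanish0 𝒳 G → ∀ η : G ⟶ F, η = 0

/-- `F` is a projective object of `mod-X`: every epimorphism of `mod-X` onto `F`'s target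
lifts. -/
def ProjRelModX (F : FunCat 𝒳) : Prop :=
  ∀ (G H : FunCat 𝒳), FinPres 𝒳 G → FinPres 𝒳 H → ∀ e : G ⟶ H, Epi e →
    ∀ f : F ⟶ H, ∃ g : F ⟶ G, g ≫ e = f

end FunctorCategory



/-! ### Auxiliary results on coherence -/

section Coherence
variable {R : Type u} [Ring R]
variable {M N : Type u} [AddCommGroup M] [Module R M] [AddCommGroup N] [Module R N]

lemma fp_of_equiv (e : M ≃ₗ[R] N) (h : Module.FinitePresentation R M) :
    Module.FinitePresentation R N := by
  haveI := h
  exact Module.finitePresentation_of_surjective e.toLinearMap e.surjective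
    (by rw [LinearEquiv.ker]; exact Submodule.fg_bot)

/-- A coherent module: every finitely generated submodule is finitely presented. -/
def CohMod (R M : Type u) [Ring R] [AddCommGroup M] [Module R M] : Prop :=
  ∀ S : Submodule R M, S.FG → Module.FinitePresentation R ↥S

lemma CohMod.of_equiv (e : M ≃ₗ[R] N) (h : CohMod R M) : CohMod R N := by
  intro S hS
  exact fp_of_equiv (e.symm.submoduleMap S).symm (h (S.map e.symm.toLinearMap) (hS.map _))

lemma CohMod.prod (hM : CohMod R M) (hN : CohMod R N) : CohMod R (M × N) := by
  intro S hS
  haveI : Module.Finite R ↥S := Module.Finite.iff_fg.mpr hS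
  set l : ↥S →ₗ[R] N := (LinearMap.snd R M N).comp S.subtype with hl
  have hrfg : (LinearMap.range l).FG := by
    have : Module.Finite R ↥(LinearMap.range l) := Module.Finite.range l
    exact Module.Finite.iff_fg.mp this
  haveI := hN _ hrfg
  have hkfg : (LinearMap.ker l.rangeRestrict).FG :=
    Module.FinitePresentation.fg_ker _ l.surjective_rangeRestrict
  haveI : Module.Finite R ↥(LinearMap.ker l.rangeRestrict) := Module.Finite.iff_fg.mpr hkfg
  set j : ↥S →ₗ[R] M := (LinearMap.fst R M N).comp S.subtype with hj
  have hker0 : ∀ z : ↥S, z ∈ LinearMap.ker l.rangeRestrict → l z = 0 := by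
    intro z hz
    rw [LinearMap.ker_rangeRestrict] at hz
    exact hz
  have hinj : Function.Injective (j.domRestrict (LinearMap.ker l.rangeRestrict)) := by
    intro x y hxy
    have h2 : l (x : ↥S) = l (y : ↥S) := by rw [hker0 _ x.2, hker0 _ y.2]
    have h1 : j (x : ↥S) = j (y : ↥S) := hxy
    apply Subtype.ext; apply Subtype.ext; apply Prod.ext
    · exact h1
    · exact h2
  have hrj : (LinearMap.range (j.domRestrict (LinearMap.ker l.rangeRestrict))).FG := by
    have : Module.Finite R ↥(LinearMap.range (j.domRestrict (LinearMap.ker l.rangeRestrict))) :=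
      Module.Finite.range _
    exact Module.Finite.iff_fg.mp this
  haveI : Module.FinitePresentation R ↥(LinearMap.ker l.rangeRestrict) :=
    fp_of_equiv (N := ↥(LinearMap.ker l.rangeRestrict))
      (LinearEquiv.ofInjective _ hinj).symm (hM _ hrj)
  exact Module.finitePresentation_of_ker l.rangeRestrict l.surjective_rangeRestrict

lemma CohMod.of_surjective (h : CohMod R M) (l : M →ₗ[R] N) (hl : Function.Surjective l)
    (hk : (LinearMap.ker l).FG) : CohMod R N := by
  intro S hS
  have hNfg : (S.comap l).FG := by
    apply Submodule.fg_of_fg_map_of_fg_inf_ker l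
    · rwa [Submodule.map_comap_eq_of_surjective hl]
    · have hle : LinearMap.ker l ≤ S.comap l := by
        intro x hx
        have : l x = 0 := hx
        simp only [Submodule.mem_comap, this]
        exact S.zero_mem
      rw [inf_of_le_right hle]
      exact hk
  haveI := h _ hNfg
  have hmem : ∀ x ∈ S.comap l, l x ∈ S := fun x hx => hx
  set q : ↥(S.comap l) →ₗ[R] ↥S := l.restrict hmem with hq
  have hqs : Function.Surjective q := by
    rintro ⟨s, hs⟩
    obtain ⟨m, rfl⟩ := hl s
    exact ⟨⟨m, hs⟩, rfl⟩
  have hkq : (LinearMap.ker q).FG := by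
    apply Submodule.fg_of_fg_map_of_fg_inf_ker (S.comap l).subtype
    · have : (LinearMap.ker q).map (S.comap l).subtype = LinearMap.ker l := by
        ext x
        constructor
        · rintro ⟨⟨y, hy⟩, hky, rfl⟩
          simpa [hq, LinearMap.restrict_apply] using Subtype.ext_iff.mp hky
        · intro hx
          have hx0 : l x = 0 := hx
          have hx' : x ∈ S.comap l := by
            simp only [Submodule.mem_comap, hx0]
            exact S.zero_mem
          refine ⟨⟨x, hx'⟩, ⟨?_, rfl⟩⟩
          have : q ⟨x, hx'⟩ = 0 := Subtype.ext (by simpa [hq, LinearMap.restrict_apply] using hx0)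
          exact this
      rw [this]; exact hk
    · rw [Submodule.ker_subtype, inf_bot_eq]; exact Submodule.fg_bot
  exact Module.finitePresentation_of_surjective q hqs hkq

/-- `Fin (n + 1) → R` is linearly equivalent to `(Fin n → R) × R`. -/
noncomputable def finSuccLEquiv (n : ℕ) : (Fin (n + 1) → R) ≃ₗ[R] (Fin n → R) × R :=
  LinearEquiv.ofLinear
    (LinearMap.prod (LinearMap.funLeft R R Fin.succ) (LinearMap.proj 0))
    (LinearMap.pi (fun i => Fin.cases (LinearMap.snd R (Fin n → R) R)
      (fun j => (LinearMap.proj j).comp (LinearMap.fst R (Fin n → R) R)) i))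
    (by
      apply LinearMap.ext; rintro ⟨v, r⟩
      refine Prod.ext (funext fun j => ?_) ?_ <;>
        simp [LinearMap.pi_apply])
    (by
      ext w i
      refine Fin.cases ?_ ?_ i <;> simp [LinearMap.pi_apply])

lemma cohMod_pi (hR : CohMod R R) : ∀ n : ℕ, CohMod R (Fin n → R)
  | 0 => by
    intro S hS
    haveI : Module.Finite R ↥S := Module.Finite.iff_fg.mpr hS
    haveI : Subsingleton ↥S := ⟨fun a b => Subtype.ext (Subsingleton.elim _ _)⟩
    haveI : Module.Free R ↥S := Module.Free.of_subsingleton R ↥S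
    exact Module.finitePresentation_of_projective R ↥S
  | (n + 1) => CohMod.of_equiv (finSuccLEquiv n).symm ((cohMod_pi hR n).prod hR)

lemma cohMod_of_fp (hR : CohMod R R) (h : Module.FinitePresentation R M) : CohMod R M := by
  obtain ⟨L, _, _, K, e, hfree, hfin, hK⟩ := Module.FinitePresentation.equiv_quotient R M
  haveI := hfree; haveI := hfin
  let b := Module.Free.chooseBasis R L
  have h1 : CohMod R L := by
    refine CohMod.of_equiv ?_ (cohMod_pi hR (Fintype.card (Module.Free.ChooseBasisIndex R L)))
    exact (b.equivFun.trans (LinearEquiv.funCongrLeft R R (Fintype.equivFin _).symm)).symm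
  have h2 : CohMod R (L ⧸ K) := by
    refine h1.of_surjective K.mkQ (Submodule.mkQ_surjective K) ?_
    rwa [Submodule.ker_mkQ]
  exact h2.of_equiv e.symm

lemma fp_submodule (hR : CohMod R R) (h : Module.FinitePresentation R M)
    (S : Submodule R M) (hS : S.FG) : Module.FinitePresentation R ↥S :=
  cohMod_of_fp hR h S hS

lemma fp_prod (hM : Module.FinitePresentation R M) (hN : Module.FinitePresentation R N) :
    Module.FinitePresentation R (M × N) := by
  haveI := hM; haveI := hN
  haveI : Module.FinitePresentation R ↥(LinearMap.ker (LinearMap.snd R M N)) :=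
    fp_of_equiv (N := ↥(LinearMap.ker (LinearMap.snd R M N)))
      (Submodule.fstEquiv R M N).symm hM
  exact Module.finitePresentation_of_ker (LinearMap.snd R M N)
    (fun n => ⟨(0, n), rfl⟩)

lemma fp_ker_of_fp (hR : CohMod R R) (hM : Module.FinitePresentation R M)
    (hN : Module.FinitePresentation R N) (l : M →ₗ[R] N) :
    Module.FinitePresentation R ↥(LinearMap.ker l) := by
  haveI := hM; haveI := hN
  have hrfg : (LinearMap.range l).FG := by
    have : Module.Finite R ↥(LinearMap.range l) := Module.Finite.range l
    exact Module.Finite.iff_fg.mp this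
  haveI := fp_submodule hR hN _ hrfg
  have hkfg : (LinearMap.ker l).FG := by
    have := Module.FinitePresentation.fg_ker l.rangeRestrict l.surjective_rangeRestrict
    rwa [LinearMap.ker_rangeRestrict] at this
  exact fp_submodule hR hM _ hkfg

end Coherence

/-! ### Auxiliary results in the functor category -/

section Helpers
variable {A : Type u} [Ring A] (𝒳 : Set (RMod A))

lemma exact_app {S : ShortComplex (FunCat 𝒳)} (hS : S.Exact) (X : (XCat 𝒳)ᵒᵖ)
    (x : S.X₂.obj X) (hx : S.g.app X x = 0) : ∃ y, S.f.app X y = x := by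
  let F := (evaluation (XCat 𝒳)ᵒᵖ AddCommGrpCat.{u}).obj X
  haveI : PreservesFiniteLimits F := ⟨fun J _ _ => inferInstance⟩
  haveI : PreservesFiniteColimits F := ⟨fun J _ _ => inferInstance⟩
  have h2 := hS.map F
  rw [ShortComplex.ab_exact_iff] at h2
  exact h2 x hx

lemma app_surj {F G : FunCat 𝒳} (η : F ⟶ G) [Epi η] (X : (XCat 𝒳)ᵒᵖ) :
    Function.Surjective (η.app X) :=
  (AddCommGrpCat.epi_iff_surjective _).mp inferInstance

lemma app_inj {F G : FunCat 𝒳} (η : F ⟶ G) [Mono η] (X : (XCat 𝒳)ᵒᵖ) :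
    Function.Injective (η.app X) :=
  (AddCommGrpCat.mono_iff_injective _).mp inferInstance

lemma finPres_of (F : FunCat 𝒳) (X₁ X₀ : RMod A) (h₁ : X₁ ∈ 𝒳) (h₀ : X₀ ∈ 𝒳)
    (u : X₁ ⟶ X₀) (v : (resY 𝒳).obj X₀ ⟶ F) (w : (resY 𝒳).map u ≫ v = 0)
    [hsurj : Epi v]
    (hker : ∀ (X : XCat 𝒳) (g : X.obj ⟶ X₀), v.app (op X) g = 0 →
      ∃ g' : X.obj ⟶ X₁, g' ≫ u = g) :
    FinPres 𝒳 F := by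
  let φ : cokernel ((resY 𝒳).map u) ⟶ F := cokernel.desc ((resY 𝒳).map u) v w
  have hπφ : cokernel.π _ ≫ φ = v := cokernel.π_desc _ _ _
  haveI : Epi (cokernel.π ((resY 𝒳).map u) ≫ φ) := by rw [hπφ]; exact hsurj
  haveI : Epi φ := epi_of_epi (cokernel.π ((resY 𝒳).map u)) φ
  haveI : ∀ X, Mono (φ.app X) := fun X => by
    rw [AddCommGrpCat.mono_iff_injective]
    rw [injective_iff_map_eq_zero]
    intro x hx
    obtain ⟨g, rfl⟩ := app_surj 𝒳 (cokernel.π ((resY 𝒳).map u)) X x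
    have hv : v.app X g = 0 := by
      have : (cokernel.π ((resY 𝒳).map u) ≫ φ).app X g = 0 := hx
      rwa [hπφ] at this
    obtain ⟨g', hg'⟩ := hker X.unop g hv
    have h0 : ((resY 𝒳).map u ≫ cokernel.π ((resY 𝒳).map u)).app X g' = 0 := by
      rw [cokernel.condition]
      rfl
    have hrw : ((resY 𝒳).map u).app X g' = g := hg'
    calc (cokernel.π ((resY 𝒳).map u)).app X g
        = (cokernel.π ((resY 𝒳).map u)).app X (((resY 𝒳).map u).app X g') := by rw [hrw]
      _ = 0 := h0
  haveI : Mono φ := NatTrans.mono_of_mono_app φ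
  haveI := isIso_of_mono_of_epi φ
  exact ⟨X₁, X₀, h₁, h₀, u, ⟨(asIso φ).symm⟩⟩

/-- A morphism regarded as an element of the restricted Yoneda functor. -/
def elOf {N : RMod A} {X : (XCat 𝒳)ᵒᵖ} (g : X.unop.obj ⟶ N) : ((resY 𝒳).obj N).obj X := g

/-- An element of the restricted Yoneda functor regarded as a morphism. -/
def homOf {N : RMod A} {X : (XCat 𝒳)ᵒᵖ} (m : ((resY 𝒳).obj N).obj X) : X.unop.obj ⟶ N := m

lemma resY_map_app {N N' : RMod A} (f : N ⟶ N') (X : (XCat 𝒳)ᵒᵖ) (g : X.unop.obj ⟶ N) :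
    ((resY 𝒳).map f).app X (elOf 𝒳 g) = elOf 𝒳 (g ≫ f) := rfl

lemma comp_app_eq {F G H : FunCat 𝒳} {α : F ⟶ G} {β : G ⟶ H} {δ : F ⟶ H}
    (hs : α ≫ β = δ) (X : (XCat 𝒳)ᵒᵖ) (y : F.obj X) :
    β.app X (α.app X y) = δ.app X y := by
  have h := congrArg (fun n : F ⟶ H => n.app X y) hs
  simpa using h

lemma comp_app_zero {F G H : FunCat 𝒳} {α : F ⟶ G} {β : G ⟶ H}
    (hs : α ≫ β = 0) (X : (XCat 𝒳)ᵒᵖ) (y : F.obj X) :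
    β.app X (α.app X y) = 0 := by
  have h := comp_app_eq 𝒳 hs X y
  simpa using h

end Helpers

set_option maxHeartbeats 2000000
set_option synthInstance.maxHeartbeats 1000000

/-- For a right coherent ring `A` and a contravariantly finite subcategory `X`
of `mod-A` containing the finitely generated projectives, for every `M ∈ mod-A` there is an
exact sequence `0 → K_M → θ_λ(M) → θ_ρ(M) → L_M → 0` in `mod-X` with `K_M, L_M ∈ mod₀-X`,
where the middle map is the canonical map `γ_M`. -/
theorem statement0 (A : Type u) [Ring A] (hA : RightCoherent A)
    (𝒳 : Set (RMod A))
    (h𝒳 : GoodSub (fun M : RMod A => Module.FinitePresentation Aᵐᵒᵖ M) 𝒳)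
    (M : RMod A) (hM : Module.FinitePresentation Aᵐᵒᵖ M)
    (P Q : RMod A) (hP : Projective P) (hPf : Module.Finite Aᵐᵒᵖ P)
    (hQ : Projective Q) (hQf : Module.Finite Aᵐᵒᵖ Q)
    (d : P ⟶ Q) (ε : Q ⟶ M) (w : d ≫ ε = 0)
    (hepi : Epi ε) (hex : (ShortComplex.mk d ε w).Exact) :
    ∃ (K L : FunCat 𝒳) (a : K ⟶ cokernel ((resY 𝒳).map d))
      (b : (resY 𝒳).obj M ⟶ L)
      (w₁ : a ≫ gammaMap 𝒳 d ε w = 0) (w₂ : gammaMap 𝒳 d ε w ≫ b = 0),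
      FinPres 𝒳 K ∧ Vanish0 𝒳 K ∧ FinPres 𝒳 L ∧ Vanish0 𝒳 L ∧
      Mono a ∧ Epi b ∧
      (ShortComplex.mk a (gammaMap 𝒳 d ε w) w₁).Exact ∧
      (ShortComplex.mk (gammaMap 𝒳 d ε w) b w₂).Exact := by
  classical
  set γ := gammaMap 𝒳 d ε w with hγdef
  -- module-theoretic setup
  have hcoh : CohMod Aᵐᵒᵖ Aᵐᵒᵖ := hA
  haveI := hM; haveI := hPf; haveI := hQf
  haveI hPproj : Module.Projective Aᵐᵒᵖ P := (IsProjective.iff_projective (R := Aᵐᵒᵖ) P).mpr hP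
  haveI hQproj : Module.Projective Aᵐᵒᵖ Q := (IsProjective.iff_projective (R := Aᵐᵒᵖ) Q).mpr hQ
  have hPfp : Module.FinitePresentation Aᵐᵒᵖ P := Module.finitePresentation_of_projective _ _
  have hQfp : Module.FinitePresentation Aᵐᵒᵖ Q := Module.finitePresentation_of_projective _ _
  have hQmem : Q ∈ 𝒳 := h𝒳.proj_mem Q hQfp hQ
  have hεs : Function.Surjective ε := (ModuleCat.epi_iff_surjective ε).mp hepi
  obtain ⟨X₀, hX₀, ξ, hξ⟩ := h𝒳.approx M hM
  have hX₀fp := h𝒳.mem_mod X₀ hX₀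
  obtain ⟨hQM, hhQM⟩ := hξ Q hQmem ε
  have hξs : Function.Surjective ξ := by
    intro m
    obtain ⟨q, hq⟩ := hεs m
    refine ⟨hQM q, ?_⟩
    show (hQM ≫ ξ) q = m
    rw [hhQM]; exact hq
  -- kernel of ξ
  set Kξ : RMod A := ModuleCat.of Aᵐᵒᵖ ↥(LinearMap.ker ξ.hom) with hKξdef
  set ιξ : Kξ ⟶ X₀ := ModuleCat.ofHom (LinearMap.ker ξ.hom).subtype with hιξdef
  have hKξfp : Module.FinitePresentation Aᵐᵒᵖ ↥(LinearMap.ker ξ.hom) := fp_ker_of_fp hcoh hX₀fp hM ξ.hom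
  obtain ⟨Y₁, hY₁, σ, hσ⟩ := h𝒳.approx Kξ hKξfp
  -- kernel of ε
  set Kε : RMod A := ModuleCat.of Aᵐᵒᵖ ↥(LinearMap.ker ε.hom) with hKεdef
  set ιε : Kε ⟶ Q := ModuleCat.ofHom (LinearMap.ker ε.hom).subtype with hιεdef
  have hKεfp : Module.FinitePresentation Aᵐᵒᵖ ↥(LinearMap.ker ε.hom) := fp_ker_of_fp hcoh hQfp hM ε.hom
  obtain ⟨Y₀, hY₀, τ, hτ⟩ := h𝒳.approx Kε hKεfp
  have hY₀fp := h𝒳.mem_mod Y₀ hY₀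
  have hY₁fp := h𝒳.mem_mod Y₁ hY₁
  -- d corestricted to the kernel of ε
  have hd0 : ∀ p : P, d p ∈ LinearMap.ker ε.hom := by
    intro p
    have : (d ≫ ε) p = 0 := by rw [w]; rfl
    exact this
  set dK : P ⟶ Kε := ModuleCat.ofHom (LinearMap.codRestrict (LinearMap.ker ε.hom) d.hom hd0) with hdKdef
  have hdKs : Function.Surjective dK := by
    rintro ⟨x, hx⟩
    obtain ⟨p, hp⟩ := (ShortComplex.moduleCat_exact_iff _).mp hex x hx
    exact ⟨p, Subtype.ext hp⟩
  have hdKι : dK ≫ ιε = d := rfl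
  have hιεε : ιε ≫ ε = 0 := by
    apply ModuleCat.hom_ext; apply LinearMap.ext; intro y
    exact y.2
  -- the fibre product W of τ ≫ ιε and d
  set t : ModuleCat.of Aᵐᵒᵖ (↥Y₀ × ↥P) ⟶ Q := ModuleCat.ofHom (LinearMap.coprod (τ ≫ ιε).hom (-d).hom) with htdef
  set W : RMod A := ModuleCat.of Aᵐᵒᵖ ↥(LinearMap.ker t.hom) with hWdef
  have hWfp : Module.FinitePresentation Aᵐᵒᵖ ↥(LinearMap.ker t.hom) :=
    fp_ker_of_fp hcoh (fp_prod hY₀fp hPfp) hQfp t.hom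
  obtain ⟨Z, hZ, ρ, hρ⟩ := h𝒳.approx W hWfp
  set wY : W ⟶ Y₀ := ModuleCat.ofHom ((LinearMap.fst _ _ _).comp (LinearMap.ker t.hom).subtype) with hwYdef
  set wP : W ⟶ P := ModuleCat.ofHom ((LinearMap.snd _ _ _).comp (LinearMap.ker t.hom).subtype) with hwPdef
  have hWcomm : wY ≫ (τ ≫ ιε) = wP ≫ d := by
    apply ModuleCat.hom_ext; apply LinearMap.ext
    rintro ⟨⟨y, p⟩, hyp⟩
    have h0 : t (y, p) = 0 := hyp
    have h1 : ιε (τ y) + (-d.hom) p = 0 := h0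
    have h2 : ιε (τ y) = d p := by
      rw [LinearMap.neg_apply] at h1
      have h3 : ιε (τ y) - d p = 0 := by rw [sub_eq_add_neg]; exact h1
      exact eq_of_sub_eq_zero h3
    exact h2
  -- functor-category setup
  set πd : (resY 𝒳).obj Q ⟶ cokernel ((resY 𝒳).map d) := cokernel.π ((resY 𝒳).map d) with hπddef
  have hπγ : πd ≫ γ = (resY 𝒳).map ε := cokernel.π_desc _ _ _
  have hS₁ : (ShortComplex.mk ((resY 𝒳).map d) πd (cokernel.condition _)).Exact :=
    ShortComplex.exact_of_g_is_cokernel _ (cokernelIsCokernel _)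
  have hS₃ : (ShortComplex.mk γ (cokernel.π γ) (cokernel.condition γ)).Exact :=
    ShortComplex.exact_of_g_is_cokernel _ (cokernelIsCokernel γ)
  refine ⟨kernel γ, cokernel γ, kernel.ι γ, cokernel.π γ, kernel.condition γ,
    cokernel.condition γ, ?_, ?_, ?_, ?_, inferInstance, inferInstance, ?_, ?_⟩
  · -- `K = kernel γ` is finitely presented
    have hτιε : (τ ≫ ιε) ≫ ε = 0 := by
      apply ModuleCat.hom_ext; apply LinearMap.ext; intro y
      exact (τ y).2
    have hψ0 : ((resY 𝒳).map (τ ≫ ιε) ≫ πd) ≫ γ = 0 := by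
      rw [Category.assoc, hπγ]
      exact resY_comp_zero 𝒳 (τ ≫ ιε) ε hτιε
    set ψ : (resY 𝒳).obj Y₀ ⟶ kernel γ :=
      kernel.lift γ ((resY 𝒳).map (τ ≫ ιε) ≫ πd) hψ0 with hψdef
    have hψι : ψ ≫ kernel.ι γ = (resY 𝒳).map (τ ≫ ιε) ≫ πd := kernel.lift_ι _ _ _
    haveI : ∀ X, Epi (ψ.app X) := by
      intro X
      rw [AddCommGrpCat.epi_iff_surjective]
      intro k
      obtain ⟨g₂, hg₂⟩ := app_surj 𝒳 πd X ((kernel.ι γ).app X k)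
      let g₂' : X.unop.obj ⟶ Q := homOf 𝒳 g₂
      have hg₂' : πd.app X (elOf 𝒳 g₂') = (kernel.ι γ).app X k := hg₂
      have hgε : g₂' ≫ ε = 0 := by
        have h1 : γ.app X ((kernel.ι γ).app X k) = 0 :=
          comp_app_zero 𝒳 (kernel.condition γ) X k
        rw [← hg₂', comp_app_eq 𝒳 hπγ X (elOf 𝒳 g₂')] at h1
        exact h1
      have hmem2 : ∀ z, g₂' z ∈ LinearMap.ker ε.hom := fun z => ConcreteCategory.congr_hom hgε z
      set gK : X.unop.obj ⟶ Kε := ModuleCat.ofHom (LinearMap.codRestrict (LinearMap.ker ε.hom) g₂'.hom hmem2) with hgKdef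
      obtain ⟨h', hh'⟩ := hτ X.unop.obj X.unop.property gK
      refine ⟨elOf 𝒳 h', ?_⟩
      apply app_inj 𝒳 (kernel.ι γ) X
      have e2 : h' ≫ (τ ≫ ιε) = g₂' := by
        apply ModuleCat.hom_ext; apply LinearMap.ext; intro z
        show ιε (τ (h' z)) = g₂' z
        have h3 : τ (h' z) = gK z := ConcreteCategory.congr_hom hh' z
        rw [h3]
        rfl
      calc (kernel.ι γ).app X (ψ.app X (elOf 𝒳 h'))
          = πd.app X (elOf 𝒳 (h' ≫ (τ ≫ ιε))) := comp_app_eq 𝒳 hψι X (elOf 𝒳 h')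
        _ = πd.app X (elOf 𝒳 g₂') := by rw [e2]
        _ = (kernel.ι γ).app X k := hg₂'
    haveI : Epi ψ := NatTrans.epi_of_epi_app ψ
    refine finPres_of 𝒳 (kernel γ) Z Y₀ hZ hY₀ (ρ ≫ wY) ψ ?_ ?_
    · have hz2 : (ρ ≫ wY) ≫ (τ ≫ ιε) = (ρ ≫ wP) ≫ d := by
        rw [Category.assoc, hWcomm, Category.assoc]
      apply zero_of_comp_mono (kernel.ι γ)
      rw [Category.assoc, hψι, ← Category.assoc, ← Functor.map_comp, hz2, Functor.map_comp,
        Category.assoc, cokernel.condition, comp_zero]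
    · intro X g hg
      have h1 := comp_app_eq 𝒳 hψι (op X) (elOf 𝒳 g)
      have hg0 : ψ.app (op X) (elOf 𝒳 g) = 0 := hg
      rw [hg0, map_zero] at h1
      have h1' : πd.app (op X) (elOf 𝒳 (g ≫ (τ ≫ ιε))) = 0 := h1.symm
      obtain ⟨g₃, hg₃⟩ := exact_app 𝒳 hS₁ (op X) (elOf 𝒳 (g ≫ (τ ≫ ιε))) h1'
      let g₃' : X.obj ⟶ P := homOf 𝒳 g₃
      have hg₃' : g₃' ≫ d = g ≫ (τ ≫ ιε) := hg₃
      have hmem3 : ∀ z, (LinearMap.prod (g : X.obj ⟶ Y₀).hom g₃'.hom) z ∈ LinearMap.ker t.hom := by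
        intro z
        have h4 : ιε (τ (g z)) = d (g₃' z) := (ConcreteCategory.congr_hom hg₃' z).symm
        show ιε (τ (g z)) + (-d.hom) (g₃' z) = 0
        rw [LinearMap.neg_apply, h4]
        simp
      set gW : X.obj ⟶ W := ModuleCat.ofHom (LinearMap.codRestrict (LinearMap.ker t.hom) _ hmem3) with hgWdef
      obtain ⟨h₂, hh₂⟩ := hρ X.obj X.property gW
      refine ⟨h₂, ?_⟩
      apply ModuleCat.hom_ext; apply LinearMap.ext; intro z
      show wY (ρ (h₂ z)) = g z
      have h5 : ρ (h₂ z) = gW z := ConcreteCategory.congr_hom hh₂ z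
      rw [h5]
      rfl
  · -- `K` vanishes on projectives
    intro Xp hproj
    haveI := hproj
    haveI : Epi dK := (ModuleCat.epi_iff_surjective dK).mpr hdKs
    have hz : ∀ x : (kernel γ).obj (op Xp), x = 0 := by
      intro x
      obtain ⟨g₂, hg₂⟩ := app_surj 𝒳 πd (op Xp) ((kernel.ι γ).app (op Xp) x)
      let g₂' : Xp.obj ⟶ Q := homOf 𝒳 g₂
      have hg₂' : πd.app (op Xp) (elOf 𝒳 g₂') = (kernel.ι γ).app (op Xp) x := hg₂
      have hgε : g₂' ≫ ε = 0 := by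
        have h1 : γ.app (op Xp) ((kernel.ι γ).app (op Xp) x) = 0 :=
          comp_app_zero 𝒳 (kernel.condition γ) (op Xp) x
        rw [← hg₂', comp_app_eq 𝒳 hπγ (op Xp) (elOf 𝒳 g₂')] at h1
        exact h1
      have hmem4 : ∀ z, g₂' z ∈ LinearMap.ker ε.hom := fun z => ConcreteCategory.congr_hom hgε z
      set gK : Xp.obj ⟶ Kε := ModuleCat.ofHom (LinearMap.codRestrict (LinearMap.ker ε.hom) g₂'.hom hmem4) with hgK4
      have hfac : Projective.factorThru gK dK ≫ dK = gK := Projective.factorThru_comp _ _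
      have hld : Projective.factorThru gK dK ≫ d = g₂' := by
        apply ModuleCat.hom_ext; apply LinearMap.ext; intro z
        have h5 : dK (Projective.factorThru gK dK z) = gK z := ConcreteCategory.congr_hom hfac z
        show d (Projective.factorThru gK dK z) = g₂' z
        have h6 : ιε (dK (Projective.factorThru gK dK z)) = ιε (gK z) := by rw [h5]
        exact h6
      apply app_inj 𝒳 (kernel.ι γ) (op Xp)
      rw [map_zero, ← hg₂']
      have h8 : πd.app (op Xp) (((resY 𝒳).map d).app (op Xp)
            (elOf 𝒳 (Projective.factorThru gK dK))) = 0 :=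
        comp_app_zero 𝒳 (cokernel.condition ((resY 𝒳).map d)) (op Xp)
          (elOf 𝒳 (Projective.factorThru gK dK))
      rw [resY_map_app, hld] at h8
      exact h8
    exact @AddCommGrpCat.isZero_of_subsingleton _ ⟨fun a b => by rw [hz a, hz b]⟩
  · -- `L = cokernel γ` is finitely presented
    haveI : ∀ X, Epi (((resY 𝒳).map ξ).app X) := by
      intro X
      rw [AddCommGrpCat.epi_iff_surjective]
      intro m
      obtain ⟨g, hg⟩ := hξ X.unop.obj X.unop.property (homOf 𝒳 m)
      exact ⟨elOf 𝒳 g, hg⟩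
    haveI : Epi ((resY 𝒳).map ξ) := NatTrans.epi_of_epi_app _
    haveI : Epi ((resY 𝒳).map ξ ≫ cokernel.π γ) := epi_comp _ _
    refine finPres_of 𝒳 (cokernel γ) (ModuleCat.of Aᵐᵒᵖ (↥Y₁ × ↥Q)) X₀
      (h𝒳.sum_mem Y₁ Q hY₁ hQmem) hX₀ (ModuleCat.ofHom (LinearMap.coprod (σ ≫ ιξ).hom hQM.hom))
      ((resY 𝒳).map ξ ≫ cokernel.π γ) ?_ ?_
    · let cop : ModuleCat.of Aᵐᵒᵖ (↥Y₁ × ↥Q) ⟶ X₀ := ModuleCat.ofHom (LinearMap.coprod (σ ≫ ιξ).hom hQM.hom)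
      let sndYQ : ModuleCat.of Aᵐᵒᵖ (↥Y₁ × ↥Q) ⟶ Q := ModuleCat.ofHom (LinearMap.snd Aᵐᵒᵖ ↥Y₁ ↥Q)
      have hcξ : cop ≫ ξ = sndYQ ≫ ε := by
        apply ModuleCat.hom_ext; apply LinearMap.ext; rintro ⟨y, q⟩
        show ξ (ιξ (σ y) + hQM q) = ε q
        rw [map_add]
        have h1 : ξ (ιξ (σ y)) = 0 := (σ y).2
        have h2 : ξ (hQM q) = ε q := ConcreteCategory.congr_hom hhQM q
        rw [h1, h2, zero_add]
      rw [← Category.assoc, ← Functor.map_comp, hcξ, Functor.map_comp, Category.assoc,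
        ← hπγ, Category.assoc, cokernel.condition, comp_zero, comp_zero]
    · intro X g hg
      have hg' : (cokernel.π γ).app (op X) (elOf 𝒳 (g ≫ ξ)) = 0 := hg
      obtain ⟨y, hy⟩ := exact_app 𝒳 hS₃ (op X) (elOf 𝒳 (g ≫ ξ)) hg'
      obtain ⟨g₂, rfl⟩ := app_surj 𝒳 πd (op X) y
      let g₂' : X.obj ⟶ Q := homOf 𝒳 g₂
      have hy2 : γ.app (op X) (πd.app (op X) (elOf 𝒳 g₂')) = elOf 𝒳 (g ≫ ξ) := hy
      rw [comp_app_eq 𝒳 hπγ (op X) (elOf 𝒳 g₂'), resY_map_app] at hy2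
      have hy' : g₂' ≫ ε = g ≫ ξ := hy2
      have hmem5 : ∀ z, ((g : X.obj ⟶ X₀) - g₂' ≫ hQM) z ∈ LinearMap.ker ξ.hom := by
        intro z
        have h1 : ε (g₂' z) = ξ (g z) := ConcreteCategory.congr_hom hy' z
        have h2 : ξ (hQM (g₂' z)) = ε (g₂' z) := ConcreteCategory.congr_hom hhQM (g₂' z)
        show ξ ((g : X.obj ⟶ X₀) z - hQM (g₂' z)) = 0
        rw [map_sub, h2, ← h1, sub_self]
      set gk : X.obj ⟶ Kξ := ModuleCat.ofHom (LinearMap.codRestrict (LinearMap.ker ξ.hom) ((g : X.obj ⟶ X₀) - g₂' ≫ hQM).hom hmem5) with hgkdef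
      obtain ⟨h'', hh''⟩ := hσ X.obj X.property gk
      refine ⟨ModuleCat.ofHom (LinearMap.prod h''.hom g₂'.hom), ?_⟩
      apply ModuleCat.hom_ext; apply LinearMap.ext; intro z
      show ιξ (σ (h'' z)) + hQM (g₂' z) = g z
      have h3 : σ (h'' z) = gk z := ConcreteCategory.congr_hom hh'' z
      rw [h3]
      show ((g : X.obj ⟶ X₀) z - hQM (g₂' z)) + hQM (g₂' z) = g z
      abel
  · -- `L` vanishes on projectives
    intro Xp hproj
    haveI := hproj
    have hz : ∀ x : (cokernel γ).obj (op Xp), x = 0 := by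
      intro x
      obtain ⟨m, hm⟩ := app_surj 𝒳 (cokernel.π γ) (op Xp) x
      let m' : Xp.obj ⟶ M := homOf 𝒳 m
      have hm' : (cokernel.π γ).app (op Xp) (elOf 𝒳 m') = x := hm
      set l := Projective.factorThru m' ε with hldef
      have hfac : l ≫ ε = m' := Projective.factorThru_comp _ _
      have h9 : (resY 𝒳).map ε ≫ cokernel.π γ = 0 := by
        rw [← hπγ, Category.assoc, cokernel.condition, comp_zero]
      have h8 : (cokernel.π γ).app (op Xp) (((resY 𝒳).map ε).app (op Xp) (elOf 𝒳 l)) = 0 :=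
        comp_app_zero 𝒳 h9 (op Xp) (elOf 𝒳 l)
      rw [resY_map_app, hfac, hm'] at h8
      exact h8
    exact @AddCommGrpCat.isZero_of_subsingleton _ ⟨fun a b => by rw [hz a, hz b]⟩
  · exact ShortComplex.exact_of_f_is_kernel _ (kernelIsKernel γ)
  · exact ShortComplex.exact_of_g_is_cokernel _ (cokernelIsCokernel γ)

end RelAus
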